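/- Fix reals θ₁ ≠ 0, σ_U², σ_V² > 0, σ_UV with σ_UV² < σ_U² σ_V², and let σ̲_{U*}² := max{ (θ₁ σ_UV + σ_U²)²/(σ_V² θ₁² + 2 σ_UV θ₁ + σ_U²), σ_U² − θ₁² σ_V² }. Then for every s ∈ [σ̲_{U*}², σ_U²], the values σ_ε² := (σ_U² − s)/θ₁², σ_{V*}² := σ_V² − σ_ε², σ_{U*V*} := σ_UV + θ₁ σ_ε² satisfy σ_ε² ≥ 0, σ_{V*}² ≥ 0, and σ_{U*V*}² ≤ s · σ_{V*}². -/

import Mathlib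

/-- The lower bound `σ̲_{U*}²` from Proposition 1. -/
noncomputable def lowerBound (θ1 sU2 sV2 sUV : ℝ) : ℝ :=
  max ((θ1 * sUV + sU2) ^ 2 / (sV2 * θ1 ^ 2 + 2 * sUV * θ1 + sU2))
    (sU2 - θ1 ^ 2 * sV2)

/-- Sharpness part of Proposition 1: every `s ∈ [σ̲_{U*}², σ_U²]` is attained by an
admissible structural parameter configuration. -/
theorem sigma_Ustar_bounds_sharp (θ1 sU2 sV2 sUV : ℝ)
    (hθ : θ1 ≠ 0) (hUpos : 0 < sU2) (hVpos : 0 < sV2)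
    (hρ : sUV ^ 2 < sU2 * sV2) :
    ∀ s ∈ Set.Icc (lowerBound θ1 sU2 sV2 sUV) sU2,
      0 ≤ (sU2 - s) / θ1 ^ 2 ∧
      0 ≤ sV2 - (sU2 - s) / θ1 ^ 2 ∧
      (sUV + θ1 * ((sU2 - s) / θ1 ^ 2)) ^ 2 ≤ s * (sV2 - (sU2 - s) / θ1 ^ 2) := by
  intro s hs
  obtain ⟨hl, hr⟩ := hs
  have hθ2 : (0:ℝ) < θ1 ^ 2 := by positivity
  have hD : 0 < sV2 * θ1 ^ 2 + 2 * sUV * θ1 + sU2 := by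
    nlinarith [sq_nonneg (sV2 * θ1 + sUV), sq_nonneg sUV, mul_pos hVpos hθ2]
  have h1 : (θ1 * sUV + sU2) ^ 2 / (sV2 * θ1 ^ 2 + 2 * sUV * θ1 + sU2) ≤ s :=
    le_trans (le_max_left _ _) hl
  have h2 : sU2 - θ1 ^ 2 * sV2 ≤ s := le_trans (le_max_right _ _) hl
  have hA : (θ1 * sUV + sU2) ^ 2 ≤ s * (sV2 * θ1 ^ 2 + 2 * sUV * θ1 + sU2) := by
    rw [div_le_iff₀ hD] at h1; linarith
  set t := (sU2 - s) / θ1 ^ 2 with ht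
  have htd : t * θ1 ^ 2 = sU2 - s := by rw [ht, div_mul_cancel₀ _ hθ2.ne']
  refine ⟨div_nonneg (by linarith) hθ2.le, ?_, ?_⟩
  · nlinarith
  · nlinarith [sq_nonneg θ1, sq_nonneg (θ1 * t)]
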